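/- Every m × m unitary matrix U can be written as a product U = D · T_1 ⋯ T_r with r ≤ m(m−1)/2, where D is a diagonal unitary matrix and each factor T_s is a Mach–Zehnder interferometer matrix: a matrix equal to the identity except on two adjacent modes j, j+1 (for some 1 ≤ j ≤ m−1), where its 2×2 block is [[e^{iθ} cos(θ'/2), −sin(θ'/2)], [e^{iθ} sin(θ'/2), cos(θ'/2)]] for some real angles θ, θ'. -/

import Mathlib

open Complex

/-- The `m × m` Mach–Zehnder interferometer matrix acting on the adjacent modes `j, j+1`
(zero-based indexing) with angles `θ, θ'`: it agrees with the identity outside rows and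
columns `j, j+1`, and its `2 × 2` block on these modes is
`[[e^{iθ} cos(θ'/2), -sin(θ'/2)], [e^{iθ} sin(θ'/2), cos(θ'/2)]]`. -/
noncomputable def mziMatrix (m j : ℕ) (θ θ' : ℝ) : Matrix (Fin m) (Fin m) ℂ :=
  fun a b =>
    if (a : ℕ) = j then
      if (b : ℕ) = j then Complex.exp (θ * Complex.I) * Real.cos (θ' / 2)
      else if (b : ℕ) = j + 1 then -(Real.sin (θ' / 2) : ℂ)
      else 0
    else if (a : ℕ) = j + 1 then
      if (b : ℕ) = j then Complex.exp (θ * Complex.I) * Real.sin (θ' / 2)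
      else if (b : ℕ) = j + 1 then (Real.cos (θ' / 2) : ℂ)
      else 0
    else if a = b then 1 else 0

lemma mul_star_mzi_apply {m : ℕ} (W : Matrix (Fin m) (Fin m) ℂ) {j : ℕ} (hj : j + 1 < m)
    (θ θ' : ℝ) (a b : Fin m) :
    (W * star (mziMatrix m j θ θ')) a b =
      if (b : ℕ) = j then
        W a ⟨j, by omega⟩ * (Complex.exp (-(θ:ℂ) * Complex.I) * Real.cos (θ'/2))
          - W a ⟨j+1, hj⟩ * Real.sin (θ'/2)
      else if (b : ℕ) = j + 1 then
        W a ⟨j, by omega⟩ * (Complex.exp (-(θ:ℂ) * Complex.I) * Real.sin (θ'/2))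
          + W a ⟨j+1, hj⟩ * Real.cos (θ'/2)
      else W a b := by
  set jf : Fin m := ⟨j, by omega⟩
  set j1 : Fin m := ⟨j+1, hj⟩
  have hne : jf ≠ j1 := by simp [jf, j1, Fin.ext_iff]
  have hconj : (starRingEnd ℂ) (Complex.exp ((θ:ℂ) * Complex.I))
      = Complex.exp (-(θ:ℂ) * Complex.I) := by
    rw [← Complex.exp_conj]; simp [Complex.conj_ofReal]
  rw [Matrix.mul_apply]
  by_cases hb : (b : ℕ) = j
  · have hbe : b = jf := by simp [jf, Fin.ext_iff, hb]
    subst hbe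
    rw [show (∑ c, W a c * (star (mziMatrix m j θ θ')) c jf)
        = ∑ c ∈ ({jf, j1} : Finset (Fin m)), W a c * (star (mziMatrix m j θ θ')) c jf from ?_]
    · rw [Finset.sum_pair hne]
      simp [Matrix.star_apply, mziMatrix, jf, j1, ← Complex.exp_conj, ← Complex.cos_conj,
        ← Complex.sin_conj, map_mul, Complex.conj_ofReal, Complex.conj_I, map_ofNat, hb]
      try ring_nf
    · refine (Finset.sum_subset (Finset.subset_univ _) ?_).symm
      intro x _ hx
      simp only [Finset.mem_insert, Finset.mem_singleton, not_or] at hx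
      have h1 : (x : ℕ) ≠ j := fun h => hx.1 (by simp [jf, Fin.ext_iff, h])
      have h2 : (x : ℕ) ≠ j + 1 := fun h => hx.2 (by simp [j1, Fin.ext_iff, h])
      simp [Matrix.star_apply, mziMatrix, h1, h2, hb, Fin.ext_iff]
  · by_cases hb1 : (b : ℕ) = j + 1
    · have hbe : b = j1 := by simp [j1, Fin.ext_iff, hb1]
      subst hbe
      rw [show (∑ c, W a c * (star (mziMatrix m j θ θ')) c j1)
          = ∑ c ∈ ({jf, j1} : Finset (Fin m)), W a c * (star (mziMatrix m j θ θ')) c j1 from ?_]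
      · rw [Finset.sum_pair hne]
        simp [Matrix.star_apply, mziMatrix, jf, j1, ← Complex.exp_conj, ← Complex.cos_conj,
          ← Complex.sin_conj, map_mul, Complex.conj_ofReal, Complex.conj_I, map_ofNat, hb]
        try ring_nf
      · refine (Finset.sum_subset (Finset.subset_univ _) ?_).symm
        intro x _ hx
        simp only [Finset.mem_insert, Finset.mem_singleton, not_or] at hx
        have h1 : (x : ℕ) ≠ j := fun h => hx.1 (by simp [jf, Fin.ext_iff, h])
        have h2 : (x : ℕ) ≠ j + 1 := fun h => hx.2 (by simp [j1, Fin.ext_iff, h])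
        simp [Matrix.star_apply, mziMatrix, h1, h2, hb, hb1, Fin.ext_iff]
    · simp only [if_neg hb, if_neg hb1]
      rw [Finset.sum_eq_single b]
      · simp [Matrix.star_apply, mziMatrix, hb, hb1]
      · intro c _ hc
        have : b ≠ c := fun h => hc h.symm
        simp [Matrix.star_apply, mziMatrix, hb, hb1, this]
      · simp

lemma mzi_entry_j {m j : ℕ} (hj : j + 1 < m) (θ θ' : ℝ) (a : Fin m) :
    mziMatrix m j θ θ' a ⟨j, by omega⟩ =
      if (a : ℕ) = j then Complex.exp ((θ:ℂ) * Complex.I) * Real.cos (θ'/2)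
      else if (a : ℕ) = j + 1 then Complex.exp ((θ:ℂ) * Complex.I) * Real.sin (θ'/2)
      else 0 := by
  by_cases ha : (a : ℕ) = j
  · simp [mziMatrix, ha]
  · by_cases ha1 : (a : ℕ) = j + 1
    · simp [mziMatrix, ha, ha1]
    · have hab : a ≠ ⟨j, by omega⟩ := by simp [Fin.ext_iff]; omega
      simp [mziMatrix, ha, ha1, hab]

lemma mzi_entry_j1 {m j : ℕ} (hj : j + 1 < m) (θ θ' : ℝ) (a : Fin m) :
    mziMatrix m j θ θ' a ⟨j + 1, hj⟩ =
      if (a : ℕ) = j then -(Real.sin (θ'/2) : ℂ)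
      else if (a : ℕ) = j + 1 then (Real.cos (θ'/2) : ℂ)
      else 0 := by
  by_cases ha : (a : ℕ) = j
  · simp [mziMatrix, ha]
  · by_cases ha1 : (a : ℕ) = j + 1
    · simp [mziMatrix, ha, ha1]
    · have hab : a ≠ ⟨j + 1, hj⟩ := by simp [Fin.ext_iff]; omega
      simp [mziMatrix, ha, ha1, hab]

lemma mzi_entry_other {m j : ℕ} (θ θ' : ℝ) (a b : Fin m)
    (hb : (b : ℕ) ≠ j) (hb1 : (b : ℕ) ≠ j + 1) :
    mziMatrix m j θ θ' a b = if a = b then 1 else 0 := by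
  by_cases ha : (a : ℕ) = j
  · have hab : a ≠ b := fun h => hb (h ▸ ha)
    simp [mziMatrix, ha, hb, hb1, hab]
  · by_cases ha1 : (a : ℕ) = j + 1
    · have hab : a ≠ b := fun h => hb1 (h ▸ ha1)
      simp [mziMatrix, ha, ha1, hb, hb1, hab]
    · simp [mziMatrix, ha, ha1]

lemma mzi_mem_unitaryGroup {m j : ℕ} (hj : j + 1 < m) (θ θ' : ℝ) :
    mziMatrix m j θ θ' ∈ Matrix.unitaryGroup (Fin m) ℂ := by
  rw [Matrix.mem_unitaryGroup_iff]
  ext a b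
  rw [mul_star_mzi_apply _ hj, mzi_entry_j hj, mzi_entry_j1 hj]
  have key : Complex.exp ((θ:ℂ) * Complex.I) * Complex.exp (-(θ:ℂ) * Complex.I) = 1 := by
    rw [← Complex.exp_add]; ring_nf; exact Complex.exp_zero
  have pyth : ((Real.cos (θ'/2) : ℂ))^2 + ((Real.sin (θ'/2) : ℂ))^2 = 1 := by
    exact_mod_cast Real.cos_sq_add_sin_sq (θ'/2)
  by_cases hb : (b : ℕ) = j
  · rw [if_pos hb]
    by_cases ha : (a : ℕ) = j
    · rw [if_pos ha, if_pos ha, show a = b from Fin.ext (by omega), Matrix.one_apply_eq]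
      linear_combination ((Real.cos (θ'/2) : ℂ))^2 * key + pyth
    · rw [if_neg ha, if_neg ha]
      by_cases ha1 : (a : ℕ) = j + 1
      · rw [if_pos ha1, if_pos ha1, Matrix.one_apply_ne (by simp [Fin.ext_iff]; omega : a ≠ b)]
        linear_combination ((Real.sin (θ'/2) : ℂ)) * ((Real.cos (θ'/2) : ℂ)) * key
      · rw [if_neg ha1, if_neg ha1, Matrix.one_apply_ne (by simp [Fin.ext_iff]; omega : a ≠ b)]
        ring
  · rw [if_neg hb]
    by_cases hb1 : (b : ℕ) = j + 1
    · rw [if_pos hb1]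
      by_cases ha : (a : ℕ) = j
      · rw [if_pos ha, if_pos ha, Matrix.one_apply_ne (by simp [Fin.ext_iff]; omega : a ≠ b)]
        linear_combination ((Real.sin (θ'/2) : ℂ)) * ((Real.cos (θ'/2) : ℂ)) * key
      · rw [if_neg ha, if_neg ha]
        by_cases ha1 : (a : ℕ) = j + 1
        · rw [if_pos ha1, if_pos ha1,
            show a = b from Fin.ext (by omega), Matrix.one_apply_eq]
          linear_combination ((Real.sin (θ'/2) : ℂ))^2 * key + pyth
        · rw [if_neg ha1, if_neg ha1, Matrix.one_apply_ne (by simp [Fin.ext_iff]; omega : a ≠ b)]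
          ring
    · rw [if_neg hb1, mzi_entry_other θ θ' a b hb hb1, Matrix.one_apply]

lemma exists_null_angles (u v : ℂ) :
    ∃ θ θ' : ℝ, u * (Complex.exp (-(θ:ℂ) * Complex.I) * Real.cos (θ'/2))
      - v * Real.sin (θ'/2) = 0 := by
  by_cases hv : v = 0
  · refine ⟨0, Real.pi, ?_⟩
    simp [hv]
  · set a : ℝ := ‖u‖ with ha_def
    set b : ℝ := ‖v‖ with hb_def
    have hb : 0 < b := by simpa [hb_def] using norm_pos_iff.mpr hv
    set α : ℝ := Real.arctan (a / b) with hα_def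
    have hc : Real.cos α ≠ 0 := ne_of_gt (Real.cos_arctan_pos _)
    have hs : Real.sin α = a / b * Real.cos α := by
      have h := Real.tan_arctan (a / b)
      rw [Real.tan_eq_sin_div_cos] at h
      rw [← hα_def] at h
      field_simp at h ⊢
      linarith [h]
    refine ⟨u.arg - v.arg, 2 * α, ?_⟩
    have h2 : (2 : ℝ) * α / 2 = α := by ring
    rw [h2, hs]
    push_cast
    rw [show -((u.arg : ℂ) - v.arg) * Complex.I
        = -((u.arg : ℂ) * Complex.I) + (v.arg : ℂ) * Complex.I by ring, Complex.exp_add]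
    have hu' : (a : ℂ) * Complex.exp ((u.arg : ℂ) * Complex.I) = u := Complex.norm_mul_exp_arg_mul_I u
    have hv' : (b : ℂ) * Complex.exp ((v.arg : ℂ) * Complex.I) = v := Complex.norm_mul_exp_arg_mul_I v
    have he : Complex.exp ((u.arg : ℂ) * Complex.I) * Complex.exp (-((u.arg : ℂ) * Complex.I)) = 1 := by
      rw [← Complex.exp_add]; ring_nf; exact Complex.exp_zero
    have hbne : (b : ℂ) ≠ 0 := by exact_mod_cast ne_of_gt hb
    have hbinv : (b : ℂ) * ((b : ℂ))⁻¹ = 1 := mul_inv_cancel₀ hbne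
    simp only [← Complex.ofReal_cos]
    linear_combination
      (-(Complex.exp (-((u.arg : ℂ) * Complex.I)) * Complex.exp ((v.arg : ℂ) * Complex.I)
        * (Real.cos α : ℂ))) * hu'
      + ((a : ℂ) / (b : ℂ) * (Real.cos α : ℂ)) * hv'
      + ((a : ℂ) * Complex.exp ((v.arg : ℂ) * Complex.I) * (Real.cos α : ℂ)) * he
      - ((a : ℂ) * Complex.exp ((v.arg : ℂ) * Complex.I) * (Real.cos α : ℂ)) * hbinv

def isMZI (m : ℕ) (A : Matrix (Fin m) (Fin m) ℂ) : Prop :=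
  ∃ (j : ℕ) (θ θ' : ℝ), j + 1 < m ∧ A = mziMatrix m j θ θ'

lemma null_row (m n : ℕ) (hn : n < m) :
    ∀ (d k : ℕ), k + d = n → ∀ (W : Matrix (Fin m) (Fin m) ℂ),
    W ∈ Matrix.unitaryGroup (Fin m) ℂ →
    (∀ a b : Fin m, a ≠ b → (n + 1 ≤ (a:ℕ) ∨ n + 1 ≤ (b:ℕ)) → W a b = 0) →
    (∀ b : Fin m, (b:ℕ) < k → W ⟨n, hn⟩ b = 0) →
    ∃ (L : List (Matrix (Fin m) (Fin m) ℂ)) (V : Matrix (Fin m) (Fin m) ℂ),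
      L.length = d ∧ (∀ A ∈ L, isMZI m A) ∧
      V ∈ Matrix.unitaryGroup (Fin m) ℂ ∧
      (∀ a b : Fin m, a ≠ b → (n + 1 ≤ (a:ℕ) ∨ n + 1 ≤ (b:ℕ)) → V a b = 0) ∧
      (∀ b : Fin m, (b:ℕ) < n → V ⟨n, hn⟩ b = 0) ∧
      W = V * L.prod := by
  intro d
  induction d with
  | zero =>
    intro k hk W hWu hWP hWz
    have hkn : k = n := by omega
    subst hkn
    exact ⟨[], W, rfl, by simp, hWu, hWP, hWz, by simp⟩
  | succ d ih =>
    intro k hk W hWu hWP hWz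
    have hkn : k < n := by omega
    have hk1m : k + 1 < m := by omega
    obtain ⟨θ, θ', hnull⟩ :=
      exists_null_angles (W ⟨n, hn⟩ ⟨k, by omega⟩) (W ⟨n, hn⟩ ⟨k + 1, hk1m⟩)
    set A := mziMatrix m k θ θ' with hA
    have hAu : A ∈ Matrix.unitaryGroup (Fin m) ℂ := mzi_mem_unitaryGroup hk1m θ θ'
    set W' := W * star A with hW'
    have hW'u : W' ∈ Matrix.unitaryGroup (Fin m) ℂ :=
      mul_mem hWu (Unitary.star_mem hAu)
    have hW'P : ∀ a b : Fin m, a ≠ b → (n + 1 ≤ (a:ℕ) ∨ n + 1 ≤ (b:ℕ)) → W' a b = 0 := by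
      intro a b hab hge
      rw [hW', mul_star_mzi_apply W hk1m θ θ' a b]
      by_cases hbk : (b:ℕ) = k
      · have han : n + 1 ≤ (a:ℕ) := by rcases hge with h | h; exact h; omega
        have h1 : W a ⟨k, by omega⟩ = 0 :=
          hWP a _ (by simp [Fin.ext_iff]; omega) (Or.inl han)
        have h2 : W a ⟨k + 1, hk1m⟩ = 0 :=
          hWP a _ (by simp [Fin.ext_iff]; omega) (Or.inl han)
        rw [if_pos hbk, h1, h2]; ring
      · by_cases hbk1 : (b:ℕ) = k + 1
        · have han : n + 1 ≤ (a:ℕ) := by rcases hge with h | h; exact h; omega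
          have h1 : W a ⟨k, by omega⟩ = 0 :=
            hWP a _ (by simp [Fin.ext_iff]; omega) (Or.inl han)
          have h2 : W a ⟨k + 1, hk1m⟩ = 0 :=
            hWP a _ (by simp [Fin.ext_iff]; omega) (Or.inl han)
          rw [if_neg hbk, if_pos hbk1, h1, h2]; ring
        · rw [if_neg hbk, if_neg hbk1]; exact hWP a b hab hge
    have hW'z : ∀ b : Fin m, (b:ℕ) < k + 1 → W' ⟨n, hn⟩ b = 0 := by
      intro b hbk
      rw [hW', mul_star_mzi_apply W hk1m θ θ']
      by_cases hbk0 : (b:ℕ) = k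
      · rw [if_pos hbk0]; exact hnull
      · have hlt : (b:ℕ) < k := by omega
        have hbk1 : (b:ℕ) ≠ k + 1 := by omega
        rw [if_neg hbk0, if_neg hbk1]; exact hWz b hlt
    obtain ⟨L, V, hlen, hmzi, hVu, hVP, hVz, hfac⟩ :=
      ih (k + 1) (by omega) W' hW'u hW'P hW'z
    have hWA : W' * A = W := by
      rw [hW', mul_assoc, (Matrix.mem_unitaryGroup_iff'.mp hAu : star A * A = 1), mul_one]
    refine ⟨L ++ [A], V, by simp [hlen], ?_, hVu, hVP, hVz, ?_⟩
    · intro B hB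
      rcases List.mem_append.mp hB with h | h
      · exact hmzi B h
      · rw [List.mem_singleton.mp h]
        exact ⟨k, θ, θ', hk1m, rfl⟩
    · rw [List.prod_append, List.prod_singleton, ← mul_assoc, ← hfac, hWA]

lemma tri_step (n : ℕ) : n * (n - 1) / 2 + n = (n + 1) * n / 2 := by
  rw [← Nat.add_mul_div_right _ n (by norm_num : 0 < 2)]
  congr 1
  cases n with
  | zero => rfl
  | succ p => simp [Nat.succ_sub_one]; ring

lemma decomp (m : ℕ) : ∀ (n : ℕ) (U : Matrix (Fin m) (Fin m) ℂ),
    U ∈ Matrix.unitaryGroup (Fin m) ℂ →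
    (∀ a b : Fin m, a ≠ b → (n ≤ (a:ℕ) ∨ n ≤ (b:ℕ)) → U a b = 0) →
    ∃ (L : List (Matrix (Fin m) (Fin m) ℂ)) (D : Matrix (Fin m) (Fin m) ℂ),
      L.length ≤ n * (n - 1) / 2 ∧ (∀ A ∈ L, isMZI m A) ∧ D.IsDiag ∧
      D ∈ Matrix.unitaryGroup (Fin m) ℂ ∧ U = D * L.prod := by
  intro n
  induction n with
  | zero =>
    intro U hU hP
    exact ⟨[], U, by simp, by simp, fun a b hab => hP a b hab (Or.inl (Nat.zero_le _)),
      hU, by simp⟩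
  | succ n ih =>
    intro U hU hP
    by_cases hnm : n < m
    · obtain ⟨L1, V, hlen1, hmzi1, hVu, hVP, hVz, hfac⟩ :=
        null_row m n hnm n 0 (by omega) U hU hP (fun b hb => absurd hb (Nat.not_lt_zero _))
      have hrow : ∀ b : Fin m, b ≠ ⟨n, hnm⟩ → V ⟨n, hnm⟩ b = 0 := by
        intro b hb
        have hbn : (b:ℕ) ≠ n := fun h => hb (Fin.ext h)
        rcases lt_or_gt_of_ne hbn with h | h
        · exact hVz b h
        · exact hVP _ b (Ne.symm hb) (Or.inr h)
      have hVV : V * star V = 1 := Matrix.mem_unitaryGroup_iff.mp hVu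
      have hdiag : V ⟨n, hnm⟩ ⟨n, hnm⟩ * star (V ⟨n, hnm⟩ ⟨n, hnm⟩) = 1 := by
        have h := congrFun (congrFun hVV ⟨n, hnm⟩) ⟨n, hnm⟩
        rw [Matrix.mul_apply, Finset.sum_eq_single (⟨n, hnm⟩ : Fin m)] at h
        · rw [Matrix.star_apply] at h
          rw [h, Matrix.one_apply_eq]
        · intro c _ hc
          rw [Matrix.star_apply, hrow c hc, star_zero, mul_zero]
        · simp
      have hcol : ∀ a : Fin m, a ≠ ⟨n, hnm⟩ → V a ⟨n, hnm⟩ = 0 := by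
        intro a ha
        have h := congrFun (congrFun hVV a) ⟨n, hnm⟩
        rw [Matrix.mul_apply, Finset.sum_eq_single (⟨n, hnm⟩ : Fin m)] at h
        · rw [Matrix.star_apply, Matrix.one_apply_ne ha] at h
          have hne : star (V ⟨n, hnm⟩ ⟨n, hnm⟩) ≠ 0 := by
            intro h0
            rw [h0, mul_zero] at hdiag
            exact zero_ne_one hdiag
          exact (mul_eq_zero.mp h).resolve_right hne
        · intro c _ hc
          rw [Matrix.star_apply, hrow c hc, star_zero, mul_zero]
        · simp
      have hVPn : ∀ a b : Fin m, a ≠ b → (n ≤ (a:ℕ) ∨ n ≤ (b:ℕ)) → V a b = 0 := by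
        intro a b hab hge
        by_cases han : (a:ℕ) = n
        · by_cases hbn : (b:ℕ) = n
          · exact absurd (Fin.ext (han.trans hbn.symm)) hab
          · have : a = ⟨n, hnm⟩ := Fin.ext han
            subst this
            exact hrow b (fun h => hbn (congrArg Fin.val h))
        · by_cases hbn : (b:ℕ) = n
          · have : b = ⟨n, hnm⟩ := Fin.ext hbn
            subst this
            exact hcol a (fun h => han (congrArg Fin.val h))
          · refine hVP a b hab ?_
            rcases hge with h | h
            · exact Or.inl (by omega)
            · exact Or.inr (by omega)
      obtain ⟨L2, D, hlen2, hmzi2, hDdiag, hDu, hfac2⟩ := ih V hVu hVPn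
      refine ⟨L2 ++ L1, D, ?_, ?_, hDdiag, hDu, ?_⟩
      · have := tri_step n
        simp only [List.length_append, hlen1]
        simp only [Nat.add_sub_cancel]
        omega
      · intro B hB
        rcases List.mem_append.mp hB with h | h
        · exact hmzi2 B h
        · exact hmzi1 B h
      · rw [List.prod_append, ← mul_assoc, ← hfac2, ← hfac]
    · have hP' : ∀ a b : Fin m, a ≠ b → (n ≤ (a:ℕ) ∨ n ≤ (b:ℕ)) → U a b = 0 := by
        intro a b hab hge
        exact absurd hge (by push_neg; constructor <;> [exact lt_of_lt_of_le a.isLt (by omega);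
          exact lt_of_lt_of_le b.isLt (by omega)])
      obtain ⟨L, D, hlen, hmzi, hDdiag, hDu, hfac⟩ := ih U hU hP'
      refine ⟨L, D, le_trans hlen ?_, hmzi, hDdiag, hDu, hfac⟩
      have h1 : n * (n - 1) ≤ (n + 1) * (n + 1 - 1) := by
        simp only [Nat.add_sub_cancel]
        exact Nat.mul_le_mul (by omega) (by omega)
      exact Nat.div_le_div_right h1

/-- Every `m × m` unitary matrix `U` can be written as `U = D * T_1 ⋯ T_r` with
`r ≤ m(m-1)/2`, where `D` is a diagonal unitary matrix and each `T_s` is a Mach–Zehnder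
interferometer matrix acting on some adjacent pair of modes `j, j+1 < m` with some real
angles `θ, θ'`. -/
theorem unitary_eq_diagonal_mul_prod_mzi (m : ℕ) (hm : 0 < m)
    (U : Matrix (Fin m) (Fin m) ℂ) (hU : U ∈ Matrix.unitaryGroup (Fin m) ℂ) :
    ∃ (r : ℕ) (_ : r ≤ m * (m - 1) / 2)
      (D : Matrix (Fin m) (Fin m) ℂ) (T : Fin r → Matrix (Fin m) (Fin m) ℂ),
        D.IsDiag ∧ D ∈ Matrix.unitaryGroup (Fin m) ℂ ∧
        (∀ s, ∃ (j : ℕ) (θ θ' : ℝ), j + 1 < m ∧ T s = mziMatrix m j θ θ') ∧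
        U = D * (List.ofFn T).prod := by
  obtain ⟨L, D, hlen, hmzi, hDdiag, hDu, hfac⟩ := decomp m m U hU
    (fun a b hab hge => absurd hge (by push_neg; exact ⟨a.isLt, b.isLt⟩))
  refine ⟨L.length, hlen, D, L.get, hDdiag, hDu, ?_, ?_⟩
  · intro s
    exact hmzi _ (List.get_mem L s)
  · rw [List.ofFn_get]
    exact hfac
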